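/- Let λ = (k^{c₁·m₁-fold},…,k^{c_t·m_t-fold},1^{m_{t+1}}) be the number partition of n consisting of m₁ copies of k^{c₁}, …, m_t copies of k^{c_t}, and m_{t+1} copies of 1, with k ≥ 2, m₁ ≥ 2, and c₁ > c₂ > ⋯ > c_t ≥ 1. Then the pair (λ, k^{c₁}) satisfies the cutting condition. -/
import Mathlib


/-- A composition of `n`: an ordered list of positive integers summing to `n`. -/
def IsComposition (n : ℕ) (l : List ℕ) : Prop :=
  (∀ x ∈ l, 0 < x) ∧ l.sum = n

/-- Refinement order on compositions: `Refines x y` means `x ≤ y` in the paper's order,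
i.e. the blocks of `x` are sums of consecutive runs of blocks of `y`.  The witness `P`
is the list of (nonempty) consecutive runs. -/
def Refines (x y : List ℕ) : Prop :=
  ∃ P : List (List ℕ), (∀ p ∈ P, p ≠ []) ∧ P.flatten = y ∧ P.map List.sum = x

/-- `Dset lam` is the poset `D_λ`: all compositions lying below some composition of type `lam`. -/
def Dset (lam : Multiset ℕ) : Set (List ℕ) :=
  {x | ∃ y : List ℕ, (y : Multiset ℕ) = lam ∧ Refines x y}

/-- The set of cut positions `{i₁,…,i_{l(x)-1}}` of a refinement witness `P`. -/
def cutSet (P : List (List ℕ)) : Finset ℕ :=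
  ((List.range (P.length - 1)).map (fun k => ((P.take (k + 1)).map List.length).sum)).toFinset

/-- The block at position `i` of the composition `l` is independent: any resonance with
`l[i]` on the left side forces a trivial resonance with a block on the right side. -/
def IsIndepAt (l : List ℕ) (i : ℕ) : Prop :=
  ∀ I J : Finset ℕ, I.Nonempty → J.Nonempty → Disjoint I J →
    (∀ a ∈ I ∪ J, a < l.length) → i ∈ I →
    (I.sum fun a => l.getD a 0) = (J.sum fun a => l.getD a 0) →
    ∃ q ∈ J, l.getD q 0 = l.getD i 0

/-- `ι(x)`: the smallest index of a block of `x` equal to `v` (`⊤` if none). -/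
noncomputable def iotaFn (v : ℕ) (x : List ℕ) : ℕ∞ :=
  sInf {j : ℕ∞ | ∃ k : ℕ, j = (k : ℕ∞) ∧ x.getD k 0 = v}

/-- Block `k` of `x ∈ D_λ` contains a copy of `v`: for every composition of type `lam`
refining `x`, the run summing to block `k` contains an entry equal to `v`. -/
def HasCopy (lam : Multiset ℕ) (v : ℕ) (x : List ℕ) (k : ℕ) : Prop :=
  ∀ P : List (List ℕ), (∀ p ∈ P, p ≠ []) → ((P.flatten : Multiset ℕ) = lam) →
    P.map List.sum = x → v ∈ P.getD k []

/-- `γ(x)`: the smallest index of a block of `x` strictly larger than `v` containing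
at least one copy of `v` (`⊤` if none). -/
noncomputable def gammaFn (lam : Multiset ℕ) (v : ℕ) (x : List ℕ) : ℕ∞ :=
  sInf {j : ℕ∞ | ∃ k : ℕ, j = (k : ℕ∞) ∧ v < x.getD k 0 ∧ HasCopy lam v x k}

/-- Split block `j` of `x` into `v` followed by the remainder. -/
def splitBlock (v : ℕ) (x : List ℕ) (j : ℕ) : List ℕ :=
  x.take j ++ [v, x.getD j 0 - v] ++ x.drop (j + 1)

/-- A number partition of `n`: a multiset of positive integers summing to `n`. -/
def IsPartition (n : ℕ) (lam : Multiset ℕ) : Prop :=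
  (∀ a ∈ lam, 0 < a) ∧ lam.sum = n

/-- Refinement order on number partitions: `PartCoarsen mu lam` means `lam ≥ mu`,
i.e. the blocks of `lam` can be grouped into disjoint nonempty sets summing to the
blocks of `mu`. -/
def PartCoarsen (mu lam : Multiset ℕ) : Prop :=
  ∃ P : Multiset (Multiset ℕ), (∀ p ∈ P, p ≠ 0) ∧ P.sum = lam ∧ P.map Multiset.sum = mu

/-- The cutting condition for the pair `(lam, pb)` where `pb` is a block of `lam`. -/
def CuttingCondition (lam : Multiset ℕ) (pb : ℕ) : Prop :=
  pb ∈ lam ∧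
  ∀ (mu : Multiset ℕ) (eta : ℕ) (I : Multiset ℕ),
    PartCoarsen mu lam → eta ∈ mu → I ≠ 0 → I ≤ lam.erase pb → eta = pb + I.sum →
      PartCoarsen (pb ::ₘ (I.sum ::ₘ mu.erase eta)) lam

/-- The vector in `ℚ^l` associated to the resonance `(I, J)`. -/
def resVec (l : ℕ) (I J : Finset (Fin l)) : Fin l → ℚ :=
  fun i => if i ∈ I then 1 else if i ∈ J then -1 else 0

/-- for λ consisting of m_i copies of k^{c_i} (i = 1,…,t, with
c_1 > ⋯ > c_t ≥ 1, k ≥ 2, m_1 ≥ 2) and m_{t+1} copies of 1, the pair (λ, k^{c_1})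
satisfies the cutting condition. -/
lemma subset_sum_of_chain : ∀ (A : Multiset ℕ) (T : ℕ), 0 < T →
    (∀ a ∈ A, a ∣ T) → (∀ a ∈ A, ∀ b ∈ A, a ∣ b ∨ b ∣ a) →
    T ≤ A.sum → ∃ B, B ≤ A ∧ B.sum = T := by
  intro A
  induction A using Multiset.strongInductionOn with
  | ih A ih =>
    intro T hT hdvd hchain hle
    have hA : A ≠ 0 := by rintro rfl; simp at hle; omega
    have hne : A.toFinset.Nonempty := by
      obtain ⟨a, ha⟩ := Multiset.exists_mem_of_ne_zero hA
      exact ⟨a, Multiset.mem_toFinset.mpr ha⟩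
    set a := A.toFinset.max' hne with hadef
    have haA : a ∈ A := Multiset.mem_toFinset.mp (A.toFinset.max'_mem hne)
    have hmax : ∀ b ∈ A, b ≤ a := fun b hb =>
      A.toFinset.le_max' b (Multiset.mem_toFinset.mpr hb)
    have hadvd := hdvd a haA
    have haT : a ≤ T := Nat.le_of_dvd hT hadvd
    have hapos : 0 < a := by
      rcases Nat.eq_zero_or_pos a with h | h
      · rw [h] at hadvd; simp at hadvd; omega
      · exact h
    have hkey : ∀ b ∈ A, b ∣ a := by
      intro b hb
      rcases hchain a haA b hb with h | h
      · have hbpos : 0 < b := by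
          rcases Nat.eq_zero_or_pos b with h0 | h0
          · have := hdvd b hb; rw [h0] at this; simp at this; omega
          · exact h0
        have : a ≤ b := Nat.le_of_dvd hbpos h
        have : a = b := le_antisymm this (hmax b hb)
        exact this ▸ dvd_refl a
      · exact h
    rcases eq_or_lt_of_le haT with h | h
    · exact ⟨{a}, Multiset.singleton_le.mpr haA, by simp [h]⟩
    · have herase : a ::ₘ A.erase a = A := Multiset.cons_erase haA
      have hsum : (A.erase a).sum = A.sum - a := by
        rw [← herase]; simp
      obtain ⟨B, hBle, hBsum⟩ := ih (A.erase a) (Multiset.erase_lt.mpr haA)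
        (T - a) (by omega)
        (fun b hb => Nat.dvd_sub (hdvd b (Multiset.mem_of_mem_erase hb))
          (hkey b (Multiset.mem_of_mem_erase hb)))
        (fun x hx y hy => hchain x (Multiset.mem_of_mem_erase hx) y (Multiset.mem_of_mem_erase hy))
        (by omega)
      refine ⟨a ::ₘ B, ?_, by simp [hBsum]; omega⟩
      rw [← herase]
      exact Multiset.cons_le_cons a hBle

theorem cutting_condition_powers (k t : ℕ) (c m : ℕ → ℕ)
    (hk : 2 ≤ k) (ht : 1 ≤ t) (hm1 : 2 ≤ m 1)
    (hm : ∀ i, 1 ≤ i → i ≤ t + 1 → 1 ≤ m i)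
    (hc : ∀ i j, 1 ≤ i → i < j → j ≤ t → c j < c i) (hct : 1 ≤ c t)
    (lam : Multiset ℕ)
    (hlam : lam = (Finset.Icc 1 t).sum (fun i => Multiset.replicate (m i) (k ^ c i)) +
      Multiset.replicate (m (t + 1)) 1) :
    CuttingCondition lam (k ^ c 1) := by
  have hkpos : 0 < k ^ c 1 := pow_pos (by omega) _
  have hel : ∀ a ∈ lam, ∃ e, e ≤ c 1 ∧ a = k ^ e := by
    intro a ha
    rw [hlam, Multiset.mem_add] at ha
    rcases ha with ha | ha
    · rw [Multiset.mem_sum] at ha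
      obtain ⟨i, hi, hai⟩ := ha
      simp only [Finset.mem_Icc] at hi
      rw [Multiset.eq_of_mem_replicate hai]
      refine ⟨c i, ?_, rfl⟩
      rcases eq_or_lt_of_le hi.1 with h | h
      · rw [← h]
      · exact le_of_lt (hc 1 i le_rfl h hi.2)
    · exact ⟨0, Nat.zero_le _, by simp [Multiset.eq_of_mem_replicate ha]⟩
  constructor
  · rw [hlam, Multiset.mem_add]
    left
    rw [Multiset.mem_sum]
    exact ⟨1, by simp [ht], Multiset.mem_replicate.mpr ⟨by omega, rfl⟩⟩
  · rintro mu eta I ⟨P, hP0, hPsum, hPmap⟩ heta hI hIle hetaval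
    rw [← hPmap, Multiset.mem_map] at heta
    obtain ⟨p, hpP, hpsum⟩ := heta
    have hPer : p ::ₘ P.erase p = P := Multiset.cons_erase hpP
    have hple : p ≤ lam := by
      rw [← hPsum, ← hPer, Multiset.sum_cons]
      exact le_self_add
    have hIpos : 0 < I.sum := by
      obtain ⟨a, haI⟩ := Multiset.exists_mem_of_ne_zero hI
      have haLam : a ∈ lam := Multiset.mem_of_le (le_trans hIle (Multiset.erase_le _ _)) haI
      obtain ⟨e, _, he⟩ := hel a haLam
      have h1 : a ≤ I.sum := Multiset.single_le_sum (fun x _ => Nat.zero_le x) a haI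
      have : 0 < a := by rw [he]; exact pow_pos (by omega) _
      omega
    have hplam : ∀ b ∈ p, ∃ e, e ≤ c 1 ∧ b = k ^ e := fun b hb =>
      hel b (Multiset.mem_of_le hple hb)
    obtain ⟨B, hBle, hBsum⟩ := subset_sum_of_chain p (k ^ c 1) hkpos
      (fun b hb => by obtain ⟨e, he, rfl⟩ := hplam b hb; exact pow_dvd_pow k he)
      (fun x hx y hy => by
        obtain ⟨e, _, rfl⟩ := hplam x hx
        obtain ⟨f, _, rfl⟩ := hplam y hy
        rcases le_total e f with h | h
        · exact Or.inl (pow_dvd_pow k h)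
        · exact Or.inr (pow_dvd_pow k h))
      (by rw [hpsum, hetaval]; omega)
    set B' := p - B with hB'def
    have hBB' : B + B' = p := add_tsub_cancel_of_le hBle
    have hB'sum : B'.sum = I.sum := by
      have h1 : B.sum + B'.sum = p.sum := by rw [← Multiset.sum_add, hBB']
      rw [hBsum, hpsum, hetaval] at h1
      omega
    refine ⟨B ::ₘ B' ::ₘ P.erase p, ?_, ?_, ?_⟩
    · intro q hq
      rcases Multiset.mem_cons.mp hq with rfl | hq
      · intro h; rw [h] at hBsum; simp at hBsum; omega
      rcases Multiset.mem_cons.mp hq with rfl | hq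
      · intro h; rw [h] at hB'sum; simp at hB'sum; omega
      · exact hP0 q (Multiset.mem_of_mem_erase hq)
    · rw [Multiset.sum_cons, Multiset.sum_cons, ← add_assoc, hBB', ← Multiset.sum_cons, hPer, hPsum]
    · have hmu : mu = eta ::ₘ (P.erase p).map Multiset.sum := by
        conv_lhs => rw [← hPmap, ← hPer]
        rw [Multiset.map_cons, hpsum]
      rw [Multiset.map_cons, Multiset.map_cons, hBsum, hB'sum, hmu, Multiset.erase_cons_head]
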